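/- Let B ∈ ℝ^{k×k} be invertible with e_kᵀ B = α e_kᵀ for some α ∈ ℝ, and let β, θ ∈ ℝ and ŵ ∈ ℝᵏ. Then ((Bᵀ B)² + α² β² e_k e_kᵀ) ŵ = θ (Bᵀ B) ŵ holds if and only if (B Bᵀ + β² e_k e_kᵀ)(B ŵ) = θ (B ŵ). In other words, the harmonic Ritz generalized eigenvalue problem for Bᵀ B is equivalent, via ω = B ŵ, to the ordinary eigenvalue problem for B Bᵀ + β² e_k e_kᵀ. -/

import Mathlib

open Matrix

noncomputable section

/-- `e_k`: the last standard basis vector of `ℝᵏ` (the `k`-th column of `I_k`). -/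
def eLast (k : ℕ) : Fin k → ℝ := fun i => if (i : ℕ) = k - 1 then 1 else 0

lemma vecMulVec_mulVec' {k : ℕ} (a b v : Fin k → ℝ) :
    (vecMulVec a b).mulVec v = (b ⬝ᵥ v) • a := by
  ext i
  simp [mulVec, vecMulVec_apply, dotProduct, Finset.mul_sum, Pi.smul_apply, smul_eq_mul,
    Finset.sum_mul, mul_comm, mul_assoc, mul_left_comm]

/-- the harmonic Ritz generalized eigenvalue problem for `Bᵀ B` is
equivalent, via `ω = B ŵ`, to the ordinary eigenvalue problem for
`B Bᵀ + β² e_k e_kᵀ`. -/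
theorem harmonic_ritz_equivalence {k : ℕ}
    (B : Matrix (Fin k) (Fin k) ℝ) (hB : IsUnit B.det)
    (α β θ : ℝ) (hrow : vecMul (eLast k) B = α • eLast k)
    (w : Fin k → ℝ) :
    ((Bᵀ * B) ^ 2 + (α ^ 2 * β ^ 2) • vecMulVec (eLast k) (eLast k)).mulVec w
        = θ • (Bᵀ * B).mulVec w ↔
    (B * Bᵀ + β ^ 2 • vecMulVec (eLast k) (eLast k)).mulVec (B.mulVec w)
        = θ • B.mulVec w := by
  have hBT : IsUnit Bᵀ.det := by rwa [det_transpose]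
  have hinj : Function.Injective Bᵀ.mulVec := mulVec_injective_iff_isUnit.2 (by
    rwa [isUnit_iff_isUnit_det])
  set e := eLast k
  have he : Bᵀ.mulVec e = α • e := by
    rw [Matrix.mulVec_transpose, hrow]
  have hdot : e ⬝ᵥ B.mulVec w = α * (e ⬝ᵥ w) := by
    rw [Matrix.dotProduct_mulVec, hrow, smul_dotProduct, smul_eq_mul]
  have key1 : ((Bᵀ * B) ^ 2 + (α ^ 2 * β ^ 2) • vecMulVec e e).mulVec w
      = Bᵀ.mulVec ((B * Bᵀ + β ^ 2 • vecMulVec e e).mulVec (B.mulVec w)) := by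
    simp only [Matrix.add_mulVec, Matrix.mulVec_add, Matrix.smul_mulVec,
      vecMulVec_mulVec', hdot, Matrix.mulVec_smul, he, smul_smul]
    congr 1
    · simp [pow_two, Matrix.mulVec_mulVec, Matrix.mul_assoc]
    · congr 1
      ring
  have key2 : θ • (Bᵀ * B).mulVec w = Bᵀ.mulVec (θ • B.mulVec w) := by
    rw [Matrix.mulVec_smul, ← Matrix.mulVec_mulVec]
  rw [key1, key2]
  exact ⟨fun h => hinj h, fun h => congrArg _ h⟩
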